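/- Let (S,T) be a compact Hausdorff space equipped with a right quasigroup structure ∘ with identity e. Then there exist a Hausdorff topological group G, a closed subgroup H of G, and a topological embedding ι : (S,T) → G with ι(e) = 1 such that ι(S) is a right transversal of H in G and ι(x)·ι(y) ∈ H·ι(x ∘ y) for all x, y ∈ S, if and only if both maps ∘ : S × S → S and χ : S × S → S are continuous (S × S with the product topology). -/

import Mathlib

universe u

section ClosedGraph

/-- Closed graph theorem for maps into a compact space. -/
theorem continuous_of_isClosed_graph' {X Y : Type*} [TopologicalSpace X] [TopologicalSpace Y]
    [CompactSpace Y] (f : X → Y) (h : IsClosed {p : X × Y | f p.1 = p.2}) : Continuous f := by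
  rw [continuous_iff_isClosed]
  intro C hC
  have hset : f ⁻¹' C = Prod.fst '' ({p : X × Y | f p.1 = p.2} ∩ {p : X × Y | p.2 ∈ C}) := by
    ext x
    constructor
    · intro hx
      exact ⟨(x, f x), ⟨rfl, hx⟩, rfl⟩
    · rintro ⟨⟨a, b⟩, ⟨hab, hb⟩, rfl⟩
      simpa [Set.mem_preimage, show f a = b from hab] using hb
  rw [hset]
  exact isClosedMap_fst_of_compactSpace _ (h.inter (hC.preimage continuous_snd))

end ClosedGraph

/-- The continuous map underlying a homeomorphism. -/
def Homeomorph.toContinuousMap {X Y : Type*} [TopologicalSpace X] [TopologicalSpace Y]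
    (f : X ≃ₜ Y) : C(X, Y) := ⟨f, f.continuous⟩

namespace RQEmbed

variable {S : Type u} [TopologicalSpace S]

/-- The homeomorphism group of `S`, with multiplication `(f * g) x = g (f x)`. -/
def HG (S : Type u) [TopologicalSpace S] : Type u := S ≃ₜ S

/-- The underlying homeomorphism. -/
def HG.toH (f : HG S) : S ≃ₜ S := f

/-- Package a homeomorphism as an element of `HG S`. -/
def HG.mk (f : S ≃ₜ S) : HG S := f

@[simp] lemma HG.toH_mk (f : S ≃ₜ S) : (HG.mk f).toH = f := rfl

instance : Group (HG S) where
  mul f g := HG.mk (f.toH.trans g.toH)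
  one := HG.mk (Homeomorph.refl S)
  inv f := HG.mk f.toH.symm
  mul_assoc f g h := rfl
  one_mul f := Homeomorph.ext fun _ => rfl
  mul_one f := Homeomorph.ext fun _ => rfl
  inv_mul_cancel f := Homeomorph.ext fun x => f.toH.apply_symm_apply x

lemma HG.mul_apply (f g : HG S) (x : S) : (f * g).toH x = g.toH (f.toH x) := rfl
lemma HG.one_apply (x : S) : (1 : HG S).toH x = x := rfl
lemma HG.inv_toH (f : HG S) : (f⁻¹).toH = f.toH.symm := rfl
lemma HG.ext {f g : HG S} (h : ∀ x, f.toH x = g.toH x) : f = g := Homeomorph.ext h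

/-- The embedding into `C(S,S) × C(S,S)`. -/
def HG.emb (f : HG S) : C(S, S) × C(S, S) :=
  (f.toH.toContinuousMap, f.toH.symm.toContinuousMap)

instance : TopologicalSpace (HG S) :=
  TopologicalSpace.induced (HG.emb (S := S)) inferInstance

lemma HG.isEmbedding_emb : Topology.IsEmbedding (HG.emb (S := S)) := by
  refine ⟨⟨rfl⟩, fun f g h => ?_⟩
  exact HG.ext fun x => congrArg (fun p : C(S, S) × C(S, S) => p.1 x) h

lemma HG.continuous_emb : Continuous (HG.emb (S := S)) := continuous_induced_dom

lemma HG.continuous_cm : Continuous fun f : HG S => f.toH.toContinuousMap :=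
  continuous_fst.comp HG.continuous_emb

lemma HG.continuous_cmi : Continuous fun f : HG S => f.toH.symm.toContinuousMap :=
  continuous_snd.comp HG.continuous_emb

instance [T2Space S] : T2Space (HG S) := HG.isEmbedding_emb.t2Space

lemma HG.emb_mul (f g : HG S) :
    HG.emb (f * g) = (g.toH.toContinuousMap.comp f.toH.toContinuousMap,
      f.toH.symm.toContinuousMap.comp g.toH.symm.toContinuousMap) := by
  refine Prod.ext ?_ ?_ <;> exact ContinuousMap.ext fun _ => rfl

lemma HG.emb_inv (f : HG S) :
    HG.emb f⁻¹ = (f.toH.symm.toContinuousMap, f.toH.toContinuousMap) := by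
  refine Prod.ext ?_ ?_ <;> exact ContinuousMap.ext fun _ => rfl

instance [CompactSpace S] [T2Space S] : IsTopologicalGroup (HG S) where
  continuous_mul := by
    apply continuous_induced_rng.2
    show Continuous fun p : HG S × HG S => HG.emb (p.1 * p.2)
    have : (fun p : HG S × HG S => HG.emb (p.1 * p.2)) = fun p =>
        (p.2.toH.toContinuousMap.comp p.1.toH.toContinuousMap,
          p.1.toH.symm.toContinuousMap.comp p.2.toH.symm.toContinuousMap) := by
      funext p; exact HG.emb_mul p.1 p.2
    rw [this]
    exact (Continuous.compCM (HG.continuous_cm.comp continuous_snd)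
        (HG.continuous_cm.comp continuous_fst)).prodMk
      (Continuous.compCM (HG.continuous_cmi.comp continuous_fst)
        (HG.continuous_cmi.comp continuous_snd))
  continuous_inv := by
    apply continuous_induced_rng.2
    show Continuous fun f : HG S => HG.emb f⁻¹
    have : (fun f : HG S => HG.emb f⁻¹) = fun f =>
        (f.toH.symm.toContinuousMap, f.toH.toContinuousMap) := funext HG.emb_inv
    rw [this]
    exact HG.continuous_cmi.prodMk HG.continuous_cm

end RQEmbed

/-- `S` is a right transversal of the subgroup `H` in `G`: every element of `G`
can be written uniquely as `h * s` with `h ∈ H` and `s ∈ S`. -/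
def IsRightTransversal {G : Type*} [Group G] (H : Subgroup G) (S : Set G) : Prop :=
  ∀ g : G, ∃! p : H × S, g = (p.1 : G) * (p.2 : G)

/-- A compact Hausdorff right quasigroup `(S, ∘)` with identity `e` embeds as a right
transversal of a closed subgroup of a Hausdorff topological group (inducing `∘`)
if and only if `∘` and `χ` are continuous. -/
theorem compact_embeds_iff_continuous {S : Type u} [TopologicalSpace S]
    [CompactSpace S] [T2Space S]
    (op : S → S → S) (e : S)
    (he₁ : ∀ x, op e x = x) (he₂ : ∀ x, op x e = x)
    (hbij : ∀ y, Function.Bijective fun x => op x y)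
    (chi : S → S → S) (hchi : ∀ x y, op (chi x y) x = y) :
    (∃ (G : Type u) (_ : Group G) (_ : TopologicalSpace G) (_ : IsTopologicalGroup G)
        (_ : T2Space G) (H : Subgroup G) (ι : S → G),
        IsClosed (H : Set G) ∧ Topology.IsEmbedding ι ∧ ι e = 1 ∧
        IsRightTransversal H (Set.range ι) ∧
        ∀ x y : S, ∃ h ∈ H, ι x * ι y = h * ι (op x y)) ↔
      (Continuous fun p : S × S => op p.1 p.2) ∧
        (Continuous fun p : S × S => chi p.1 p.2) := by
  have hchi_eq : ∀ x y z : S, chi x y = z ↔ op z x = y := by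
    intro x y z
    constructor
    · rintro rfl; exact hchi x y
    · intro h
      exact (hbij x).injective ((hchi x y).trans h.symm)
  constructor
  · rintro ⟨G, _, _, _, _, H, ι, hHc, hemb, hιe, htrans, hcompat⟩
    -- Key: op x y = z ↔ ι x * ι y * (ι z)⁻¹ ∈ H
    have key : ∀ x y z : S, op x y = z ↔ ι x * ι y * (ι z)⁻¹ ∈ H := by
      intro x y z
      constructor
      · rintro rfl
        obtain ⟨h, hh, heq⟩ := hcompat x y
        rw [heq, mul_inv_cancel_right]
        exact hh
      · intro hk
        obtain ⟨h, hh, heq⟩ := hcompat x y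
        -- ι x * ι y = h * ι (op x y) = k * ι z with k ∈ H
        set k : G := ι x * ι y * (ι z)⁻¹ with hkdef
        have heq2 : ι x * ι y = k * ι z := by rw [hkdef, inv_mul_cancel_right]
        obtain ⟨p, _, hpuniq⟩ := htrans (ι x * ι y)
        have h1 : (⟨⟨h, hh⟩, ⟨ι (op x y), Set.mem_range_self _⟩⟩ :
            H × (Set.range ι)) = p := hpuniq _ heq
        have h2 : (⟨⟨k, hk⟩, ⟨ι z, Set.mem_range_self _⟩⟩ :
            H × (Set.range ι)) = p := hpuniq _ heq2
        have : ι (op x y) = ι z := by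
          have := h1.trans h2.symm
          exact congrArg (fun q : H × (Set.range ι) => (q.2 : G)) this
        exact hemb.injective this
    have hcont : ∀ F : (S × S) × S → G, Continuous F →
        IsClosed {p : (S × S) × S | F p ∈ H} := by
      intro F hF
      exact hHc.preimage hF
    have hop : Continuous fun p : S × S => op p.1 p.2 := by
      apply continuous_of_isClosed_graph'
      have : {p : (S × S) × S | op p.1.1 p.1.2 = p.2} =
          {p : (S × S) × S | ι p.1.1 * ι p.1.2 * (ι p.2)⁻¹ ∈ H} := by
        ext p; exact key p.1.1 p.1.2 p.2
      rw [this]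
      exact hcont _ (((hemb.continuous.comp (continuous_fst.comp continuous_fst)).mul
        (hemb.continuous.comp (continuous_snd.comp continuous_fst))).mul
        ((hemb.continuous.comp continuous_snd).inv))
    refine ⟨hop, ?_⟩
    apply continuous_of_isClosed_graph'
    have : {p : (S × S) × S | chi p.1.1 p.1.2 = p.2} =
        {p : (S × S) × S | ι p.2 * ι p.1.1 * (ι p.1.2)⁻¹ ∈ H} := by
      ext p
      rw [Set.mem_setOf_eq, hchi_eq, Set.mem_setOf_eq, key]
    rw [this]
    exact hcont _ (((hemb.continuous.comp continuous_snd).mul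
      (hemb.continuous.comp (continuous_fst.comp continuous_fst))).mul
      ((hemb.continuous.comp (continuous_snd.comp continuous_fst)).inv))
  · rintro ⟨hop, hchi_cont⟩
    -- right translation homeomorphisms
    have hleft : ∀ y x, chi y (op x y) = x := by
      intro y x
      exact (hbij y).injective (hchi y (op x y))
    let R : S → RQEmbed.HG S := fun y => RQEmbed.HG.mk
      { toFun := fun x => op x y
        invFun := fun z => chi y z
        left_inv := fun x => hleft y x
        right_inv := fun z => hchi y z
        continuous_toFun := hop.comp (continuous_id.prodMk continuous_const)
        continuous_invFun := hchi_cont.comp (continuous_const.prodMk continuous_id) }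
    have hR_apply : ∀ y x, (R y).toH x = op x y := fun _ _ => rfl
    have hR_symm : ∀ y z, (R y).toH.symm z = chi y z := fun _ _ => rfl
    have hchiyy : ∀ y, chi y y = e := by
      intro y
      rw [hchi_eq]; exact he₁ y
    -- continuity of R
    have hRcont : Continuous R := by
      apply continuous_induced_rng.2
      have hF : Continuous fun p : S × S => op p.2 p.1 :=
        hop.comp (continuous_snd.prodMk continuous_fst)
      let F : C(S × S, S) := ⟨fun p => op p.2 p.1, hF⟩
      let Ch : C(S × S, S) := ⟨fun p => chi p.1 p.2, hchi_cont⟩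
      have h1 : (fun y => (R y).toH.toContinuousMap) = ⇑F.curry := by
        funext y; exact ContinuousMap.ext fun x => rfl
      have h2 : (fun y => (R y).toH.symm.toContinuousMap) = ⇑Ch.curry := by
        funext y; exact ContinuousMap.ext fun x => rfl
      show Continuous fun y => RQEmbed.HG.emb (R y)
      have : (fun y => RQEmbed.HG.emb (R y)) = fun y => (F.curry y, Ch.curry y) := by
        funext y
        exact Prod.ext (congrFun h1 y) (congrFun h2 y)
      rw [this]
      exact (F.curry.continuous).prodMk (Ch.curry.continuous)
    have hRinj : Function.Injective R := by
      intro y y' h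
      have := congrArg (fun f : RQEmbed.HG S => f.toH e) h
      simpa [hR_apply, he₁] using this
    -- the subgroup H of maps fixing e
    let H : Subgroup (RQEmbed.HG S) :=
      { carrier := {f | f.toH e = e}
        mul_mem' := by
          intro a b ha hb
          show (a * b).toH e = e
          rw [RQEmbed.HG.mul_apply, ha, hb]
        one_mem' := rfl
        inv_mem' := by
          intro a ha
          show (a⁻¹).toH e = e
          rw [RQEmbed.HG.inv_toH]
          exact a.toH.injective (by rw [Homeomorph.apply_symm_apply]; exact ha.symm) }
    have hmemH : ∀ f : RQEmbed.HG S, f ∈ H ↔ f.toH e = e := fun _ => Iff.rfl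
    refine ⟨RQEmbed.HG S, inferInstance, inferInstance, inferInstance, inferInstance,
      H, R, ?_, ?_, ?_, ?_, ?_⟩
    · -- H closed
      have : (H : Set (RQEmbed.HG S)) =
          (fun f : RQEmbed.HG S => f.toH.toContinuousMap e) ⁻¹' {e} := by
        ext f
        exact Iff.rfl
      rw [this]
      exact (isClosed_singleton).preimage ((continuous_eval_const e).comp
        RQEmbed.HG.continuous_cm)
    · exact hRcont.isClosedEmbedding hRinj |>.isEmbedding
    · exact RQEmbed.HG.ext fun x => by simp [hR_apply, he₂, RQEmbed.HG.one_apply]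
    · -- right transversal
      intro g
      have hhe : (g * (R (g.toH e))⁻¹).toH e = e := by
        rw [RQEmbed.HG.mul_apply, RQEmbed.HG.inv_toH, hR_symm]
        exact hchiyy _
      refine ⟨⟨⟨g * (R (g.toH e))⁻¹, hhe⟩, ⟨R (g.toH e), Set.mem_range_self _⟩⟩, ?_, ?_⟩
      · show g = g * (R (g.toH e))⁻¹ * R (g.toH e)
        rw [inv_mul_cancel_right]
      · rintro ⟨⟨h, hh⟩, ⟨s, ⟨y, rfl⟩⟩⟩ habs
        simp only at habs
        have hge : g.toH e = y := by
          rw [habs, RQEmbed.HG.mul_apply, hR_apply, hh, he₁]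
        refine Prod.ext (Subtype.ext ?_) (Subtype.ext ?_)
        · show h = g * (R (g.toH e))⁻¹
          rw [hge]
          exact eq_mul_inv_of_mul_eq habs.symm
        · show R y = R (g.toH e)
          rw [hge]
    · -- compatibility
      intro x y
      refine ⟨R x * R y * (R (op x y))⁻¹, ?_, ?_⟩
      · show (R x * R y * (R (op x y))⁻¹).toH e = e
        rw [RQEmbed.HG.mul_apply, RQEmbed.HG.mul_apply, RQEmbed.HG.inv_toH,
          hR_apply, hR_apply, hR_symm, he₁]
        exact hchiyy _
      · rw [inv_mul_cancel_right]
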